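/- Let p ≥ 5 be a prime with p ≡ 2 (mod 3). Let θ ∈ ℚ_p and q ∈ ℕ satisfy |θ−1|_p < |(q:ℚ_p)|_p < 1 and (θ−1)(1−θ−q) ≠ 0, and let f(x) = ((θx+q−1)/(x+θ+q−2))³. Then for every x ∈ ℚ_p with |x − 1|_p > |q|_p one has |f(x) − 1|_p ≤ |θ−1|_p < |q|_p; in particular f maps 𝒜₁ = {x : |x−1|_p > |q|_p} into the ball 𝒜₀ = {x : |x−1|_p < |q|_p}. -/

import Mathlib

/-- the Potts–Bethe mapping sends `𝒜₁ = {x : ‖x-1‖ > ‖q‖}` into the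
ball `𝒜₀ = {x : ‖x-1‖ < ‖q‖}`: indeed `‖f(x)-1‖ ≤ ‖θ-1‖ < ‖q‖` there. -/
theorem potts_bethe_maps_A1_into_A0 (p : ℕ) [Fact (Nat.Prime p)]
    (hp5 : 5 ≤ p) (hp3 : p % 3 = 2) (θ : ℚ_[p]) (q : ℕ)
    (hθq : ‖θ - 1‖ < ‖(q : ℚ_[p])‖) (hq : ‖(q : ℚ_[p])‖ < 1)
    (hne : (θ - 1) * (1 - θ - (q : ℚ_[p])) ≠ 0) :
    ∀ x : ℚ_[p], ‖(q : ℚ_[p])‖ < ‖x - 1‖ →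
      ‖((θ * x + (q : ℚ_[p]) - 1) / (x + θ + (q : ℚ_[p]) - 2)) ^ 3 - 1‖ ≤ ‖θ - 1‖ ∧
      ‖θ - 1‖ < ‖(q : ℚ_[p])‖ := by
  intro x hx
  refine ⟨?_, hθq⟩
  set B : ℚ_[p] := x + θ + (q : ℚ_[p]) - 2 with hBdef
  have hsmall : ‖(θ - 1) + (q : ℚ_[p])‖ ≤ ‖(q : ℚ_[p])‖ := by
    calc ‖(θ - 1) + (q : ℚ_[p])‖ ≤ max ‖θ - 1‖ ‖(q : ℚ_[p])‖ :=
          Padic.nonarchimedean _ _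
      _ ≤ ‖(q : ℚ_[p])‖ := max_le hθq.le le_rfl
  have hne' : ‖(x - 1)‖ ≠ ‖(θ - 1) + (q : ℚ_[p])‖ :=
    (lt_of_le_of_lt hsmall hx).ne'
  have hBnorm : ‖B‖ = ‖x - 1‖ := by
    have h1 : B = (x - 1) + ((θ - 1) + (q : ℚ_[p])) := by rw [hBdef]; ring
    rw [h1, Padic.add_eq_max_of_ne hne']
    exact max_eq_left ((lt_of_le_of_lt hsmall hx).le)
  have hxpos : 0 < ‖x - 1‖ := lt_of_le_of_lt (norm_nonneg _) hx
  have hB0 : B ≠ 0 := by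
    intro h
    rw [h, norm_zero] at hBnorm
    exact hxpos.ne' hBnorm.symm
  set t : ℚ_[p] := (θ * x + (q : ℚ_[p]) - 1) / B with htdef
  have hkey : t - 1 = (θ - 1) * (x - 1) / B := by
    rw [htdef, div_sub_one hB0, hBdef]
    ring
  have ht1 : ‖t - 1‖ = ‖θ - 1‖ := by
    rw [hkey, norm_div, norm_mul, hBnorm, mul_div_assoc,
      div_self hxpos.ne', mul_one]
  have htlt : ‖t - 1‖ < 1 := by rw [ht1]; exact lt_trans hθq hq
  have ht : ‖t‖ ≤ 1 := by
    calc ‖t‖ = ‖(t - 1) + 1‖ := by ring_nf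
      _ ≤ max ‖t - 1‖ ‖(1 : ℚ_[p])‖ := Padic.nonarchimedean _ _
      _ ≤ 1 := max_le htlt.le (by simp)
  have hfac : t ^ 3 - 1 = (t - 1) * (t ^ 2 + t + 1) := by ring
  have hq1 : ‖t ^ 2 + t + 1‖ ≤ 1 := by
    calc ‖t ^ 2 + t + 1‖ ≤ max ‖t ^ 2 + t‖ ‖(1 : ℚ_[p])‖ :=
          Padic.nonarchimedean _ _
      _ ≤ 1 := by
          refine max_le ?_ (by simp)
          calc ‖t ^ 2 + t‖ ≤ max ‖t ^ 2‖ ‖t‖ := Padic.nonarchimedean _ _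
            _ ≤ 1 := by
                refine max_le ?_ ht
                rw [pow_two, norm_mul]
                exact mul_le_one₀ ht (norm_nonneg _) ht
  calc ‖t ^ 3 - 1‖ = ‖t - 1‖ * ‖t ^ 2 + t + 1‖ := by rw [hfac, norm_mul]
    _ ≤ ‖t - 1‖ * 1 := by
        exact mul_le_mul_of_nonneg_left hq1 (norm_nonneg _)
    _ = ‖θ - 1‖ := by rw [mul_one, ht1]
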